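/- Let f: ℝ → ℝ be 1-Lipschitz with f(x) ≥ |x| for all x and ∫_ℝ (f(x) - |x|) dx ≤ 1. Then f(x) ≤ √(x² + 2) for all x ∈ ℝ. -/

import Mathlib

open MeasureTheory


lemma lin_int (p s u v : ℝ) : ∫ x in u..v, (p + s*x) = (p*v + s*v^2/2) - (p*u + s*u^2/2) := by
  apply intervalIntegral.integral_eq_sub_of_hasDerivAt (f := fun x => p*x + s*x^2/2)
  · intro x _
    have h1 := (hasDerivAt_id x).const_mul p
    have h2 := ((hasDerivAt_pow 2 x).const_mul s).div_const 2
    have := h1.add h2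
    exact this.congr_deriv (by ring)
  · exact (by fun_prop : Continuous fun x : ℝ => p + s*x).intervalIntegrable _ _

lemma area_lb (x₀ c : ℝ) (hx : 0 ≤ x₀) (hc : x₀ ≤ c) :
    ENNReal.ofReal ((c^2 - x₀^2)/2) ≤ ∫⁻ x : ℝ, ENNReal.ofReal (c - |x - x₀| - |x|) := by
  set a : ℝ := (x₀ - c)/2 with ha
  set b : ℝ := (x₀ + c)/2 with hb
  have ha0 : a ≤ 0 := by rw [ha]; linarith
  have hbx : x₀ ≤ b := by rw [hb]; linarith
  have hab : a ≤ b := by linarith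
  have hcont : Continuous (fun x : ℝ => c - |x - x₀| - |x|) := by fun_prop
  have hI : ∫ x in a..b, (c - |x - x₀| - |x|) = (c^2 - x₀^2)/2 := by
    have i1 : ∫ x in a..(0:ℝ), (c - |x - x₀| - |x|) = ∫ x in a..(0:ℝ), ((c - x₀) + 2*x) := by
      apply intervalIntegral.integral_congr
      intro x hx'
      rw [Set.uIcc_of_le ha0] at hx'
      obtain ⟨h1, h2⟩ := hx'
      simp only
      rw [abs_of_nonpos (by linarith), abs_of_nonpos (by linarith)]; ring
    have i2 : ∫ x in (0:ℝ)..x₀, (c - |x - x₀| - |x|) = ∫ x in (0:ℝ)..x₀, ((c - x₀) + 0*x) := by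
      apply intervalIntegral.integral_congr
      intro x hx'
      rw [Set.uIcc_of_le hx] at hx'
      obtain ⟨h1, h2⟩ := hx'
      simp only
      rw [abs_of_nonpos (by linarith), abs_of_nonneg h1]; ring
    have i3 : ∫ x in x₀..b, (c - |x - x₀| - |x|) = ∫ x in x₀..b, ((c + x₀) + (-2)*x) := by
      apply intervalIntegral.integral_congr
      intro x hx'
      rw [Set.uIcc_of_le hbx] at hx'
      obtain ⟨h1, h2⟩ := hx'
      simp only
      rw [abs_of_nonneg (by linarith), abs_of_nonneg (by linarith)]; ring
    have s1 : ∫ x in a..x₀, (c - |x - x₀| - |x|) = (∫ x in a..(0:ℝ), (c - |x - x₀| - |x|)) + ∫ x in (0:ℝ)..x₀, (c - |x - x₀| - |x|) :=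
      (intervalIntegral.integral_add_adjacent_intervals (hcont.intervalIntegrable _ _) (hcont.intervalIntegrable _ _)).symm
    have s2 : ∫ x in a..b, (c - |x - x₀| - |x|) = (∫ x in a..x₀, (c - |x - x₀| - |x|)) + ∫ x in x₀..b, (c - |x - x₀| - |x|) :=
      (intervalIntegral.integral_add_adjacent_intervals (hcont.intervalIntegrable _ _) (hcont.intervalIntegrable _ _)).symm
    rw [s2, s1, i1, i2, i3, lin_int, lin_int, lin_int, ha, hb]
    ring
  have hnn : ∀ x ∈ Set.Ioc a b, 0 ≤ c - |x - x₀| - |x| := by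
    intro x hx'
    obtain ⟨h1, h2⟩ := hx'
    rcases abs_cases x with ⟨e1, e2⟩ | ⟨e1, e2⟩ <;>
      rcases abs_cases (x - x₀) with ⟨g1, g2⟩ | ⟨g1, g2⟩ <;>
      rw [e1, g1] <;> simp only [ha, hb] at h1 h2 <;> linarith
  calc ENNReal.ofReal ((c^2 - x₀^2)/2)
      = ENNReal.ofReal (∫ x in Set.Ioc a b, (c - |x - x₀| - |x|)) := by
        rw [← intervalIntegral.integral_of_le hab, hI]
    _ = ∫⁻ x in Set.Ioc a b, ENNReal.ofReal (c - |x - x₀| - |x|) := by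
        rw [MeasureTheory.ofReal_integral_eq_lintegral_ofReal]
        · exact (hcont.integrableOn_Ioc)
        · exact (ae_restrict_iff' measurableSet_Ioc).2 (Filter.Eventually.of_forall hnn)
    _ ≤ ∫⁻ x : ℝ, ENNReal.ofReal (c - |x - x₀| - |x|) := setLIntegral_le_lintegral _ _

lemma main_nonneg (f : ℝ → ℝ) (hlip : LipschitzWith 1 f) (hdom : ∀ x, |x| ≤ f x)
    (harea : ∫⁻ x : ℝ, ENNReal.ofReal (f x - |x|) ≤ 1) (x₀ : ℝ) (hx : 0 ≤ x₀) :
    f x₀ ≤ Real.sqrt (x₀ ^ 2 + 2) := by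
  set c := f x₀ with hcdef
  have hc : x₀ ≤ c := by have := hdom x₀; rwa [abs_of_nonneg hx] at this
  have hmono : ∀ x, c - |x - x₀| - |x| ≤ f x - |x| := by
    intro x
    have := hlip.dist_le_mul x x₀
    rw [Real.dist_eq, Real.dist_eq] at this
    have h2 := abs_le.mp (by simpa using this)
    linarith [h2.1]
  have key := (area_lb x₀ c hx hc).trans
    ((lintegral_mono fun x => ENNReal.ofReal_le_ofReal (hmono x)).trans harea)
  have hle : (c^2 - x₀^2)/2 ≤ 1 := ENNReal.ofReal_le_one.mp key
  have hc0 : 0 ≤ c := le_trans (abs_nonneg x₀) (hdom x₀)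
  rw [show x₀^2 + 2 = (x₀^2 + 2) from rfl]
  have : c^2 ≤ x₀^2 + 2 := by linarith
  calc c ≤ Real.sqrt (c^2) := by rw [Real.sqrt_sq hc0]
    _ ≤ Real.sqrt (x₀^2 + 2) := Real.sqrt_le_sqrt this

/-- If `f : ℝ → ℝ` is 1-Lipschitz, `f(x) ≥ |x|` everywhere, and the area
between the graphs of `f` and `|·|` is at most 1, then `f(x) ≤ √(x² + 2)` for all `x`. -/
theorem stmt12 (f : ℝ → ℝ) (hlip : LipschitzWith 1 f) (hdom : ∀ x, |x| ≤ f x)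
    (harea : ∫⁻ x : ℝ, ENNReal.ofReal (f x - |x|) ≤ 1) :
    ∀ x : ℝ, f x ≤ Real.sqrt (x ^ 2 + 2) := by
  intro x
  rcases le_or_gt 0 x with hx | hx
  · exact main_nonneg f hlip hdom harea x hx
  · set g : ℝ → ℝ := fun y => f (-y) with hg
    have hglip : LipschitzWith 1 g := hlip.comp (LipschitzWith.neg LipschitzWith.id) |>.weaken (by norm_num)
    have hgdom : ∀ y, |y| ≤ g y := fun y => by simpa [hg, abs_neg] using hdom (-y)
    have hgarea : ∫⁻ y : ℝ, ENNReal.ofReal (g y - |y|) ≤ 1 := by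
      have hmeas : Measurable fun y : ℝ => ENNReal.ofReal (f y - |y|) := by
        exact (hlip.continuous.sub continuous_abs).measurable.ennreal_ofReal
      have := (Measure.measurePreserving_neg (volume : Measure ℝ)).lintegral_comp hmeas
      calc ∫⁻ y : ℝ, ENNReal.ofReal (g y - |y|)
          = ∫⁻ y : ℝ, ENNReal.ofReal (f (-y) - |(-y)|) := by simp [hg, abs_neg]
        _ = ∫⁻ y : ℝ, ENNReal.ofReal (f y - |y|) := this
        _ ≤ 1 := harea
    have := main_nonneg g hglip hgdom hgarea (-x) (by linarith)
    simpa [hg, neg_neg] using this
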